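/- Let x, h : Ω → A be a.e. strongly measurable, suppose x is invertible in L⁰(Ω, A) with a.e. strongly measurable inverse y (so x(ω)y(ω) = y(ω)x(ω) = 1 a.e.), and suppose 2‖h(ω)‖·‖y(ω)‖ < 1 for μ-almost every ω (i.e., 2‖h‖ ≪ ‖x⁻¹‖⁻¹). Then x + h is invertible in L⁰(Ω, A) and its inverse z satisfies ‖z(ω) − y(ω)‖ ≤ 2‖y(ω)‖²‖h(ω)‖ for a.e. ω. (Proposition 2.3(ii), specialized to the Banach–Kantorovich algebra L⁰(Ω, A).) -/

import Mathlib

open MeasureTheory Filter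

/-- If `x` is invertible in `L⁰(Ω, A)` with a.e. inverse `y` and `h`
satisfies `2‖h ω‖·‖y ω‖ < 1` a.e., then `x + h` is invertible in `L⁰(Ω, A)` and
its inverse `z` satisfies `‖z ω - y ω‖ ≤ 2‖y ω‖²‖h ω‖` a.e. (Proposition 2.3(ii).) -/
theorem stmt4 {Ω : Type*} [MeasurableSpace Ω] (μ : Measure Ω) [IsFiniteMeasure μ]
    (hμ : 0 < μ Set.univ)
    {A : Type*} [NormedRing A] [NormedAlgebra ℂ A] [CompleteSpace A] [NormOneClass A]
    (x h y : Ω → A)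
    (hx : AEStronglyMeasurable x μ) (hh : AEStronglyMeasurable h μ)
    (hy : AEStronglyMeasurable y μ)
    (hinv : ∀ᵐ ω ∂μ, x ω * y ω = 1 ∧ y ω * x ω = 1)
    (hsmall : ∀ᵐ ω ∂μ, 2 * ‖h ω‖ * ‖y ω‖ < 1) :
    ∃ z : Ω → A, AEStronglyMeasurable z μ ∧
      (∀ᵐ ω ∂μ, (x ω + h ω) * z ω = 1 ∧ z ω * (x ω + h ω) = 1) ∧
      (∀ᵐ ω ∂μ, ‖z ω - y ω‖ ≤ 2 * ‖y ω‖ ^ 2 * ‖h ω‖) := by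
  classical
  set u : Ω → A := fun ω => -(y ω * h ω) with hu_def
  have hu_meas : AEStronglyMeasurable u μ := (hy.mul hh).neg
  set z : Ω → A := fun ω => (∑' n : ℕ, u ω ^ n) * y ω with hz_def
  -- key pointwise smallness
  have hult : ∀ᵐ ω ∂μ, ‖u ω‖ < 1 ∧ ‖u ω‖ ≤ ‖y ω‖ * ‖h ω‖ ∧ 2 * ‖h ω‖ * ‖y ω‖ < 1 := by
    filter_upwards [hsmall] with ω hs
    have hle : ‖u ω‖ ≤ ‖y ω‖ * ‖h ω‖ := by
      simpa [hu_def] using norm_mul_le (y ω) (h ω)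
    have h0 : 0 ≤ ‖h ω‖ * ‖y ω‖ := by positivity
    refine ⟨?_, hle, hs⟩
    nlinarith [norm_nonneg (y ω), norm_nonneg (h ω)]
  refine ⟨z, ?_, ?_, ?_⟩
  · -- measurability: z is an a.e. limit of partial sums
    have hpart : ∀ N : ℕ, AEStronglyMeasurable
        (fun ω => (∑ n ∈ Finset.range N, u ω ^ n) * y ω) μ := by
      intro N
      exact (Finset.aestronglyMeasurable_fun_sum (Finset.range N)
        (fun n _ => hu_meas.pow n)).mul hy
    refine aestronglyMeasurable_of_tendsto_ae atTop hpart ?_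
    filter_upwards [hult] with ω ⟨hlt, _, _⟩
    have hsum := (summable_geometric_of_norm_lt_one hlt).hasSum
    simpa [hz_def, Finset.sum_mul] using (hsum.mul_right (y ω)).tendsto_sum_nat
  · filter_upwards [hinv, hult] with ω ⟨hxy, hyx⟩ ⟨hlt, _, _⟩
    constructor
    · have hfact : x ω + h ω = x ω * (1 - u ω) := by
        simp only [hu_def, sub_neg_eq_add, mul_add, mul_one, ← mul_assoc, hxy, one_mul]
      rw [hfact, hz_def, mul_assoc, ← mul_assoc (1 - u ω),
        mul_neg_geom_series _ hlt, one_mul, hxy]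
    · have hfact : y ω * (x ω + h ω) = 1 - u ω := by
        simp only [hu_def, sub_neg_eq_add, mul_add, hyx]
      rw [hz_def, mul_assoc, hfact, geom_series_mul_neg _ hlt]
  · filter_upwards [hult] with ω ⟨hlt, hle, hs⟩
    have hsum : Summable fun n : ℕ => u ω ^ n := summable_geometric_of_norm_lt_one hlt
    have hz_sub : z ω - y ω = (u ω * ∑' n : ℕ, u ω ^ n) * y ω := by
      rw [hz_def, geom_series_mul_shift _ hlt, geom_series_succ _ hlt, sub_mul, one_mul]
    have hnorm_tsum : ‖∑' n : ℕ, u ω ^ n‖ ≤ (1 - ‖u ω‖)⁻¹ := by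
      have hgeo : Summable fun n : ℕ => ‖u ω‖ ^ n :=
        summable_geometric_of_lt_one (norm_nonneg _) hlt
      have hns : Summable fun n : ℕ => ‖u ω ^ n‖ :=
        hgeo.of_nonneg_of_le (fun n => norm_nonneg _) (fun n => norm_pow_le _ _)
      calc ‖∑' n : ℕ, u ω ^ n‖ ≤ ∑' n : ℕ, ‖u ω ^ n‖ := norm_tsum_le_tsum_norm hns
        _ ≤ ∑' n : ℕ, ‖u ω‖ ^ n := Summable.tsum_le_tsum (fun n => norm_pow_le _ _) hns hgeo
        _ = (1 - ‖u ω‖)⁻¹ := tsum_geometric_of_lt_one (norm_nonneg _) hlt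
    have hinv2 : (1 - ‖u ω‖)⁻¹ ≤ 2 := by
      have h1 : ‖u ω‖ ≤ ‖y ω‖ * ‖h ω‖ := hle
      rw [inv_le_comm₀ (by nlinarith) (by norm_num)]
      nlinarith
    calc ‖z ω - y ω‖ = ‖(u ω * ∑' n : ℕ, u ω ^ n) * y ω‖ := by rw [hz_sub]
      _ ≤ ‖u ω‖ * ‖∑' n : ℕ, u ω ^ n‖ * ‖y ω‖ :=
          le_trans (norm_mul_le _ _) (by gcongr; exact norm_mul_le _ _)
      _ ≤ (‖y ω‖ * ‖h ω‖) * 2 * ‖y ω‖ :=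
          mul_le_mul (mul_le_mul hle (hnorm_tsum.trans hinv2) (norm_nonneg _)
            (by positivity)) le_rfl (norm_nonneg _) (by positivity)
      _ = 2 * ‖y ω‖ ^ 2 * ‖h ω‖ := by ring
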